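/- Let 0 < μ ≤ 2, α < 0, and N a positive integer. Then the mass of the N-tail state, M(ω) = (N (μ+1)^{1/μ}/μ) ω^{1/μ − 1/2} ∫_{|α|/(N√ω)}^{1} (1 − t²)^{1/μ − 1} dt, is differentiable and strictly increasing in ω on the interval (α²/N², ∞); its derivative equals C(N,μ,ω) · [ (1/μ − 1/2) ∫_{|α|/(N√ω)}^{1} (1 − t²)^{1/μ − 1} dt + (|α|/(2N√ω)) (1 − α²/(N²ω))^{1/μ − 1} ], with C(N,μ,ω) = N (μ+1)^{1/μ} μ^{−1} ω^{1/μ − 3/2}, and this expression is strictly positive (Vakhitov–Kolokolov condition). -/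

import Mathlib

open MeasureTheory Set intervalIntegral Topology

/-- The squared `L²` norm (mass) of the `N`-tail stationary state `Ψ⁰_ω`, as a
function of `ω`:
`M(ω) = (N (μ+1)^{1/μ}/μ) ω^{1/μ − 1/2} ∫_{|α|/(N√ω)}^{1} (1 − t²)^{1/μ − 1} dt`. -/
noncomputable def tailMass (μ α : ℝ) (N : ℕ) (ω : ℝ) : ℝ :=
  ((N : ℝ) * (μ + 1) ^ (1 / μ) / μ) * ω ^ (1 / μ - 1 / 2) *
    ∫ t in (|α| / (N * Real.sqrt ω))..1, (1 - t ^ 2) ^ (1 / μ - 1)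

lemma aux_intg {q : ℝ} (hq : -1 < q) {x : ℝ} (hx : 0 ≤ x) (hx1 : x ≤ 1) :
    IntervalIntegrable (fun t => (1 - t ^ 2) ^ q) volume x 1 := by
  have hmeas : AEStronglyMeasurable (fun t : ℝ => (1 - t ^ 2) ^ q)
      (volume.restrict (Set.uIoc x 1)) :=
    ((by measurability : Measurable (fun t : ℝ => (1 - t ^ 2) ^ q))).aestronglyMeasurable
  rcases le_or_gt 0 q with hq0 | hq0
  · refine (_root_.intervalIntegrable_const (c := (1:ℝ))).mono_fun hmeas ?_
    filter_upwards [ae_restrict_mem measurableSet_uIoc] with t ht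
    rw [uIoc_of_le hx1] at ht
    have h0 : (0:ℝ) ≤ 1 - t ^ 2 := by nlinarith [ht.1, ht.2]
    have h1 : 1 - t ^ 2 ≤ 1 := by nlinarith [ht.1]
    simp only [Real.norm_eq_abs, abs_of_nonneg (Real.rpow_nonneg h0 q)]
    calc (1 - t ^ 2) ^ q ≤ 1 := Real.rpow_le_one h0 h1 hq0
    _ ≤ |(1:ℝ)| := by norm_num
  · have hg : IntervalIntegrable (fun t : ℝ => (1 - t) ^ q) volume x 1 := by
      have := (intervalIntegral.intervalIntegrable_rpow' hq
        (a := 1 - x) (b := 1 - 1)).comp_sub_left 1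
      simpa using this
    refine hg.mono_fun hmeas ?_
    filter_upwards [ae_restrict_mem measurableSet_uIoc] with t ht
    rw [uIoc_of_le hx1] at ht
    have ht0 : 0 < t := lt_of_le_of_lt hx ht.1
    have h0 : (0:ℝ) ≤ 1 - t ^ 2 := by nlinarith [ht.2]
    have h0' : (0:ℝ) ≤ 1 - t := by linarith [ht.2]
    rw [Real.norm_eq_abs, Real.norm_eq_abs, abs_of_nonneg (Real.rpow_nonneg h0 q),
      abs_of_nonneg (Real.rpow_nonneg h0' q)]
    rcases eq_or_lt_of_le ht.2 with h | h
    · simp [h]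
    · have hlt : (0:ℝ) < 1 - t := by linarith
      exact Real.rpow_le_rpow_of_nonpos hlt (by nlinarith) hq0.le

lemma core (μ α : ℝ) (hμ : 0 < μ) (hμ2 : μ ≤ 2) (hα : α < 0)
    (N : ℕ) (hN : 0 < N) (ω : ℝ) (hω : ω > α ^ 2 / (N : ℝ) ^ 2) :
    HasDerivAt (tailMass μ α N)
      (((N : ℝ) * (μ + 1) ^ (1 / μ) / μ) * ω ^ (1 / μ - 3 / 2) *
        ((1 / μ - 1 / 2) *
            (∫ t in (|α| / (N * Real.sqrt ω))..1, (1 - t ^ 2) ^ (1 / μ - 1))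
          + |α| / (2 * N * Real.sqrt ω) *
            (1 - α ^ 2 / ((N : ℝ) ^ 2 * ω)) ^ (1 / μ - 1))) ω ∧
    0 < ((N : ℝ) * (μ + 1) ^ (1 / μ) / μ) * ω ^ (1 / μ - 3 / 2) *
        ((1 / μ - 1 / 2) *
            (∫ t in (|α| / (N * Real.sqrt ω))..1, (1 - t ^ 2) ^ (1 / μ - 1))
          + |α| / (2 * N * Real.sqrt ω) *
            (1 - α ^ 2 / ((N : ℝ) ^ 2 * ω)) ^ (1 / μ - 1)) := by
  have hN0 : (0:ℝ) < N := Nat.cast_pos.mpr hN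
  have hN' : (N:ℝ) ≠ 0 := ne_of_gt hN0
  have hα0 : α ≠ 0 := ne_of_lt hα
  have hα2 : 0 < α ^ 2 := by positivity
  have hω0 : 0 < ω := lt_trans (div_pos hα2 (by positivity)) hω
  have hω' : ω ≠ 0 := ne_of_gt hω0
  have hs : 0 < Real.sqrt ω := Real.sqrt_pos.mpr hω0
  have hs' : Real.sqrt ω ≠ 0 := ne_of_gt hs
  have hq : -1 < 1 / μ - 1 := by
    have : 0 < 1 / μ := by positivity
    linarith
  have ha0 : 0 < |α| / ((N:ℝ) * Real.sqrt ω) := div_pos (abs_pos.mpr hα0) (by positivity)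
  have hα2N : α ^ 2 < (N:ℝ) ^ 2 * ω := by
    rw [gt_iff_lt, div_lt_iff₀ (by positivity)] at hω
    linarith
  have haN : |α| < (N:ℝ) * Real.sqrt ω := by
    have h' : |α| / (N:ℝ) < Real.sqrt ω := by
      rw [Real.lt_sqrt (by positivity), div_pow, sq_abs]
      exact hω
    rw [mul_comm]
    exact (div_lt_iff₀ hN0).mp h'
  have ha1 : |α| / ((N:ℝ) * Real.sqrt ω) < 1 := (div_lt_one (by positivity)).mpr haN
  have ha2 : (|α| / ((N:ℝ) * Real.sqrt ω)) ^ 2 = α ^ 2 / ((N:ℝ) ^ 2 * ω) := by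
    rw [div_pow, sq_abs, mul_pow, Real.sq_sqrt hω0.le]
  have hbase : 0 < 1 - (|α| / ((N:ℝ) * Real.sqrt ω)) ^ 2 := by nlinarith
  -- derivative of the moving endpoint
  have hsder : HasDerivAt Real.sqrt (1 / (2 * Real.sqrt ω)) ω := Real.hasDerivAt_sqrt hω'
  have h1 : HasDerivAt (fun w => (N:ℝ) * Real.sqrt w) ((N:ℝ) * (1 / (2 * Real.sqrt ω))) ω :=
    hsder.const_mul _
  have h1ne : (N:ℝ) * Real.sqrt ω ≠ 0 := by positivity
  have hA : HasDerivAt (fun w => |α| / ((N:ℝ) * Real.sqrt w))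
      (-(|α| / (2 * (N:ℝ) * ω * Real.sqrt ω))) ω := by
    have h2 := (h1.inv h1ne).const_mul |α|
    have hval : |α| * (-((N:ℝ) * (1 / (2 * Real.sqrt ω))) / ((N:ℝ) * Real.sqrt ω) ^ 2)
        = -(|α| / (2 * (N:ℝ) * ω * Real.sqrt ω)) := by
      rw [mul_pow, Real.sq_sqrt hω0.le]
      field_simp
    rw [← hval]
    simpa [div_eq_mul_inv] using h2
  -- FTC
  have hInt : IntervalIntegrable (fun t : ℝ => (1 - t ^ 2) ^ (1 / μ - 1)) volume
      (|α| / ((N:ℝ) * Real.sqrt ω)) 1 := aux_intg hq ha0.le ha1.le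
  have hcf : ContinuousAt (fun t : ℝ => (1 - t ^ 2) ^ (1 / μ - 1))
      (|α| / ((N:ℝ) * Real.sqrt ω)) := by
    refine ContinuousAt.rpow_const ?_ (Or.inl (ne_of_gt hbase))
    fun_prop
  have hmeasf : StronglyMeasurableAtFilter (fun t : ℝ => (1 - t ^ 2) ^ (1 / μ - 1))
      (𝓝 (|α| / ((N:ℝ) * Real.sqrt ω))) volume := by
    have : Measurable (fun t : ℝ => (1 - t ^ 2) ^ (1 / μ - 1)) := by measurability
    exact this.stronglyMeasurable.stronglyMeasurableAtFilter
  have hF : HasDerivAt (fun u => ∫ t in u..1, (1 - t ^ 2) ^ (1 / μ - 1))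
      (-(1 - (|α| / ((N:ℝ) * Real.sqrt ω)) ^ 2) ^ (1 / μ - 1))
      (|α| / ((N:ℝ) * Real.sqrt ω)) :=
    intervalIntegral.integral_hasDerivAt_left hInt hmeasf hcf
  have hG : HasDerivAt
      (fun w => ∫ t in (|α| / ((N:ℝ) * Real.sqrt w))..1, (1 - t ^ 2) ^ (1 / μ - 1))
      (-(1 - (|α| / ((N:ℝ) * Real.sqrt ω)) ^ 2) ^ (1 / μ - 1) *
        -(|α| / (2 * (N:ℝ) * ω * Real.sqrt ω))) ω := by
    have := hF.comp ω hA
    simpa [Function.comp_def] using this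
  have hP : HasDerivAt (fun w : ℝ => w ^ (1 / μ - 1 / 2))
      ((1 / μ - 1 / 2) * ω ^ (1 / μ - 1 / 2 - 1)) ω :=
    Real.hasDerivAt_rpow_const (Or.inl hω')
  have hM := (hP.mul hG).const_mul ((N : ℝ) * (μ + 1) ^ (1 / μ) / μ)
  have hfun : (tailMass μ α N) = fun w => ((N : ℝ) * (μ + 1) ^ (1 / μ) / μ) *
      (w ^ (1 / μ - 1 / 2) *
        ∫ t in (|α| / ((N:ℝ) * Real.sqrt w))..1, (1 - t ^ 2) ^ (1 / μ - 1)) := by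
    funext w
    simp [tailMass, mul_assoc]
  simp only [Pi.mul_apply] at hM
  rw [← hfun] at hM
  have hexp1 : ω ^ (1 / μ - 1 / 2 - 1 : ℝ) = ω ^ (1 / μ - 3 / 2 : ℝ) := by
    congr 1; ring
  have hexp2 : ω ^ (1 / μ - 1 / 2 : ℝ) = ω ^ (1 / μ - 3 / 2 : ℝ) * ω := by
    rw [← Real.rpow_add_one hω']
    congr 1; ring
  have hder : HasDerivAt (tailMass μ α N)
      (((N : ℝ) * (μ + 1) ^ (1 / μ) / μ) * ω ^ (1 / μ - 3 / 2) *
        ((1 / μ - 1 / 2) *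
            (∫ t in (|α| / (N * Real.sqrt ω))..1, (1 - t ^ 2) ^ (1 / μ - 1))
          + |α| / (2 * N * Real.sqrt ω) *
            (1 - α ^ 2 / ((N : ℝ) ^ 2 * ω)) ^ (1 / μ - 1))) ω := by
    refine hM.congr_deriv (Eq.symm ?_)
    rw [hexp1, hexp2, ← ha2]
    have hD : ω * (|α| / (2 * (N:ℝ) * ω * Real.sqrt ω)) = |α| / (2 * (N:ℝ) * Real.sqrt ω) := by
      rw [show (2:ℝ) * N * ω * Real.sqrt ω = 2 * N * Real.sqrt ω * ω by ring,
        ← div_div, ← mul_div_assoc, mul_comm ω, mul_div_assoc, div_self hω', mul_one]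
    linear_combination (-(((N:ℝ) * (μ + 1) ^ (1 / μ) / μ) * ω ^ (1 / μ - 3 / 2 : ℝ) *
      (1 - (|α| / ((N:ℝ) * Real.sqrt ω)) ^ 2) ^ (1 / μ - 1))) * hD
  refine ⟨hder, ?_⟩
  have hK : 0 < (N : ℝ) * (μ + 1) ^ (1 / μ) / μ :=
    div_pos (mul_pos hN0 (Real.rpow_pos_of_pos (by linarith) _)) hμ
  have hωpow : 0 < ω ^ (1 / μ - 3 / 2 : ℝ) := Real.rpow_pos_of_pos hω0 _
  have hp0 : 0 ≤ 1 / μ - 1 / 2 := by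
    have : (1:ℝ) / 2 ≤ 1 / μ := by
      rw [div_le_div_iff₀ (by norm_num) hμ]; linarith
    linarith
  have hI : 0 ≤ ∫ t in (|α| / (N * Real.sqrt ω))..1, (1 - t ^ 2) ^ (1 / μ - 1) := by
    refine intervalIntegral.integral_nonneg ha1.le ?_
    intro u hu
    have h1 : 0 ≤ 1 - u ^ 2 := by nlinarith [hu.1, hu.2, ha0]
    exact Real.rpow_nonneg h1 _
  have hbase' : 0 < 1 - α ^ 2 / ((N:ℝ) ^ 2 * ω) := by
    rw [sub_pos, div_lt_one (by positivity)]; exact hα2N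
  have hterm2 : 0 < |α| / (2 * N * Real.sqrt ω) *
      (1 - α ^ 2 / ((N : ℝ) ^ 2 * ω)) ^ (1 / μ - 1) :=
    mul_pos (div_pos (abs_pos.mpr hα0) (by positivity)) (Real.rpow_pos_of_pos hbase' _)
  exact mul_pos (mul_pos hK hωpow)
    (add_pos_of_nonneg_of_pos (mul_nonneg hp0 hI) hterm2)

theorem stmt_10 (μ α : ℝ) (hμ : 0 < μ) (hμ2 : μ ≤ 2) (hα : α < 0)
    (N : ℕ) (hN : 0 < N) :
    -- `M` is differentiable on `(α²/N², ∞)` with the stated derivative, the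
    -- derivative is strictly positive (Vakhitov–Kolokolov condition), and `M`
    -- is strictly increasing there
    (∀ ω : ℝ, ω > α ^ 2 / (N : ℝ) ^ 2 →
      HasDerivAt (tailMass μ α N)
        (((N : ℝ) * (μ + 1) ^ (1 / μ) / μ) * ω ^ (1 / μ - 3 / 2) *
          ((1 / μ - 1 / 2) *
              (∫ t in (|α| / (N * Real.sqrt ω))..1, (1 - t ^ 2) ^ (1 / μ - 1))
            + |α| / (2 * N * Real.sqrt ω) *
              (1 - α ^ 2 / ((N : ℝ) ^ 2 * ω)) ^ (1 / μ - 1))) ω ∧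
      0 < ((N : ℝ) * (μ + 1) ^ (1 / μ) / μ) * ω ^ (1 / μ - 3 / 2) *
          ((1 / μ - 1 / 2) *
              (∫ t in (|α| / (N * Real.sqrt ω))..1, (1 - t ^ 2) ^ (1 / μ - 1))
            + |α| / (2 * N * Real.sqrt ω) *
              (1 - α ^ 2 / ((N : ℝ) ^ 2 * ω)) ^ (1 / μ - 1))) ∧
    StrictMonoOn (tailMass μ α N) (Ioi (α ^ 2 / (N : ℝ) ^ 2)) := by
  refine ⟨fun ω hω => core μ α hμ hμ2 hα N hN ω hω, ?_⟩
  refine strictMonoOn_of_deriv_pos (convex_Ioi _) ?_ ?_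
  · intro x hx
    exact ((core μ α hμ hμ2 hα N hN x hx).1.continuousAt.continuousWithinAt)
  · intro x hx
    rw [interior_Ioi] at hx
    rw [(core μ α hμ hμ2 hα N hN x hx).1.deriv]
    exact (core μ α hμ hμ2 hα N hN x hx).2
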